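/- arXiv:2305.07377 — 7 statements merged into one kernel-verified Lean document; each statement's English description precedes it below -/
import Mathlib

section
/- Let n ≥ 2 be an integer, 0 < α ≤ 1, and define q_k = α·k(n-k)/(n(n-1)) for integers 0 ≤ k ≤ n. Define T_0 = T_n = 0 and, for 1 ≤ k ≤ n-1, T_k = ((n-1)/α)·((n-k)(H_{n-1} - H_{n-k}) + k(H_{n-1} - H_{k-1})). Then for every 1 ≤ k ≤ n-1, the expected-hitting-time recurrence holds: T_k = 1 + q_k·T_{k+1} + q_k·T_{k-1} + (1 - 2q_k)·T_k; equivalently, q_k·(2T_k - T_{k+1} - T_{k-1}) = 1. -/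
set_option maxHeartbeats 1600000


/-- The `j`-th harmonic number `H_j = ∑_{i=1}^j 1/i` (with `H 0 = 0`). -/
noncomputable def H (j : ℕ) : ℝ := ∑ i ∈ Finset.range j, (1 : ℝ) / (i + 1)

lemma Hsucc (m : ℕ) : H (m + 1) = H m + 1 / ((m : ℝ) + 1) := by
  simp [H, Finset.sum_range_succ]

lemma H0 : H 0 = 0 := by simp [H]

lemma H1 : H 1 = 1 := by simp [H]

lemma Hp2 (m : ℕ) : H (m + 2) = H (m + 1) + 1 / ((m : ℝ) + 2) := by
  rw [show m + 2 = m + 1 + 1 from rfl, Hsucc]; push_cast; ring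

lemma Hp3 (m : ℕ) : H (m + 3) = H (m + 1) + 1 / ((m : ℝ) + 2) + 1 / ((m : ℝ) + 3) := by
  rw [show m + 3 = m + 2 + 1 from rfl, Hsucc, Hp2]; push_cast; ring

lemma H2 : H 2 = 3 / 2 := by
  rw [show H 2 = H (1 + 1) from rfl, Hsucc, H1]; norm_num

/-- The explicit formula
`T_k = ((n-1)/α)·((n-k)(H_{n-1} - H_{n-k}) + k(H_{n-1} - H_{k-1}))`, with
`T_0 = T_n = 0`, satisfies the expected-hitting-time recurrence
`T_k = 1 + q_k T_{k+1} + q_k T_{k-1} + (1-2q_k) T_k`, equivalently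
`q_k (2T_k - T_{k+1} - T_{k-1}) = 1`, where `q_k = α·k(n-k)/(n(n-1))`. -/
theorem stmt4 (n : ℕ) (hn : 2 ≤ n) (α : ℝ) (hα0 : 0 < α) (hα1 : α ≤ 1)
    (q : ℕ → ℝ)
    (hq : ∀ k : ℕ, k ≤ n → q k = α * (k : ℝ) * ((n : ℝ) - (k : ℝ)) / ((n : ℝ) * ((n : ℝ) - 1)))
    (T : ℕ → ℝ) (hT0 : T 0 = 0) (hTn : T n = 0)
    (hT : ∀ k : ℕ, 1 ≤ k → k ≤ n - 1 →
      T k = (((n : ℝ) - 1) / α) *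
        (((n : ℝ) - (k : ℝ)) * (H (n - 1) - H (n - k)) + (k : ℝ) * (H (n - 1) - H (k - 1)))) :
    ∀ k : ℕ, 1 ≤ k → k ≤ n - 1 →
      T k = 1 + q k * T (k + 1) + q k * T (k - 1) + (1 - 2 * q k) * T k
      ∧ q k * (2 * T k - T (k + 1) - T (k - 1)) = 1 := by
  intro k hk1 hk2
  have hα : α ≠ 0 := ne_of_gt hα0
  obtain ⟨a, rfl⟩ : ∃ a, k = a + 1 := ⟨k - 1, by omega⟩
  obtain ⟨c, rfl⟩ : ∃ c, n = a + 1 + (c + 1) := ⟨n - (a + 1) - 1, by omega⟩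
  have key : q (a + 1) * (2 * T (a + 1) - T (a + 1 + 1) - T (a + 1 - 1)) = 1 := by
    have hq1 := hq (a + 1) (by omega)
    rcases Nat.eq_zero_or_pos a with ha | ha
    · subst ha
      rcases Nat.eq_zero_or_pos c with hc | hc
      · -- n = 2, k = 1
        subst hc
        have h1 := hT 1 (by omega) (by omega)
        norm_num at h1 hq1
        rw [hq1, h1, show T (0+1+1) = 0 from hTn, show T (0+1-1) = 0 from hT0, H1, H0]
        field_simp
        ring
      · -- k = 1, n = c + 3
        obtain ⟨c', rfl⟩ : ∃ c', c = c' + 1 := ⟨c - 1, by omega⟩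
        have hT1 := hT 1 (by omega) (by omega)
        have hT2 := hT 2 (by omega) (by omega)
        have e1 : 0 + 1 + (c' + 1 + 1) - 1 = c' + 2 := by omega
        have e2 : 0 + 1 + (c' + 1 + 1) - 2 = c' + 1 := by omega
        rw [e1] at hT1 hT2
        rw [e2] at hT2
        rw [show (1:ℕ) - 1 = 0 from rfl] at hT1
        rw [show (2:ℕ) - 1 = 1 from rfl] at hT2
        rw [show (0:ℕ)+1+1 = 2 from rfl, show (0:ℕ)+1-1 = 0 from rfl]
        rw [hq1, hT1, hT2, hT0, Hsucc (c' + 1), H0, H1]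
        push_cast
        have d1 : ((c' : ℝ) + 1 + 1) ≠ 0 := by positivity
        have d2 : ((c' : ℝ) + 3) ≠ 0 := by positivity
        have d3 : ((c' : ℝ) + 2) ≠ 0 := by positivity
        field_simp
        ring_nf
        field_simp
        ring
    · obtain ⟨a', rfl⟩ : ∃ a', a = a' + 1 := ⟨a - 1, by omega⟩
      rcases Nat.eq_zero_or_pos c with hc | hc
      · -- k = n - 1, n = a' + 3
        subst hc
        have hTk := hT (a' + 2) (by omega) (by omega)
        have hTm := hT (a' + 1) (by omega) (by omega)
        have e1 : a' + 1 + 1 + (0 + 1) - 1 = a' + 2 := by omega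
        have e2 : a' + 1 + 1 + (0 + 1) - (a' + 2) = 1 := by omega
        have e3 : a' + 1 + 1 + (0 + 1) - (a' + 1) = 2 := by omega
        rw [e1, e2, show a'+2-1 = a'+1 from by omega] at hTk
        rw [e1, e3, show a'+1-1 = a' from by omega] at hTm
        rw [show a'+1+1+1 = a'+1+1+(0+1) from by omega, hTn,
            show a'+1+1-1 = a'+1 from by omega]
        rw [hq1, show a'+1+1 = a'+2 from by omega, hTk, hTm,
            Hsucc (a' + 1), Hsucc a', H1, H2]
        push_cast
        have d1 : ((a' : ℝ) + 1) ≠ 0 := by positivity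
        have d2 : ((a' : ℝ) + 2) ≠ 0 := by positivity
        have d3 : ((a' : ℝ) + 3) ≠ 0 := by positivity
        field_simp
        ring_nf
        field_simp
        ring
      · -- interior: k = a' + 2, n = a' + c' + 4
        obtain ⟨c', rfl⟩ : ∃ c', c = c' + 1 := ⟨c - 1, by omega⟩
        have hTk := hT (a' + 2) (by omega) (by omega)
        have hTp := hT (a' + 3) (by omega) (by omega)
        have hTm := hT (a' + 1) (by omega) (by omega)
        have e1 : a' + 1 + 1 + (c' + 1 + 1) - 1 = a' + c' + 3 := by omega
        have e2 : a' + 1 + 1 + (c' + 1 + 1) - (a' + 2) = c' + 2 := by omega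
        have e3 : a' + 1 + 1 + (c' + 1 + 1) - (a' + 3) = c' + 1 := by omega
        have e4 : a' + 1 + 1 + (c' + 1 + 1) - (a' + 1) = c' + 3 := by omega
        have en : a' + 1 + 1 + (c' + 1 + 1) = a' + c' + 4 := by omega
        rw [e1, e2, show a'+2-1 = a'+1 from by omega, en] at hTk
        rw [e1, e3, show a'+3-1 = a'+2 from by omega, en] at hTp
        rw [e1, e4, show a'+1-1 = a' from by omega, en] at hTm
        rw [en] at hq1
        rw [Hp2 c', Hsucc a'] at hTk
        rw [Hp2 a', Hsucc a'] at hTp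
        rw [Hp3 c'] at hTm
        push_cast at hTk hTp hTm hq1
        have h1 : (0:ℝ) ≤ (a' : ℝ) := Nat.cast_nonneg _
        have h2 : (0:ℝ) ≤ (c' : ℝ) := Nat.cast_nonneg _
        have d1 : ((a' : ℝ) + 1) ≠ 0 := by positivity
        have d2 : ((a' : ℝ) + 2) ≠ 0 := by positivity
        have d3 : ((c' : ℝ) + 2) ≠ 0 := by positivity
        have d4 : ((c' : ℝ) + 3) ≠ 0 := by positivity
        have d5 : ((a' : ℝ) + (c' : ℝ) + 4) ≠ 0 := by positivity
        have d6 : ((a' : ℝ) + (c' : ℝ) + 4 - 1) ≠ 0 := ne_of_gt (by linarith)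
        have hmain : α * (((a' : ℝ) + 2) * ((c' : ℝ) + 2)) *
            (2 * T (a' + 2) - T (a' + 1 + 1 + 1) - T (a' + 1)) =
            ((a' : ℝ) + (c' : ℝ) + 4) * ((a' : ℝ) + (c' : ℝ) + 4 - 1) := by
          rw [show a'+1+1+1 = a'+3 from by omega, hTk, hTp, hTm]
          generalize H (a' + c' + 3) = X
          generalize H (c' + 1) = Y
          generalize H a' = Z
          field_simp [hα, d1, d2, d3, d4]
          ring
        rw [show a'+1+1-1 = a'+1 from by omega, hq1,
            show a'+1+1 = a'+2 from by omega]
        push_cast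
        rw [div_mul_eq_mul_div, div_eq_one_iff_eq (mul_ne_zero d5 d6)]
        linear_combination hmain
  exact ⟨by linear_combination key, key⟩
end

section
/- Let n ≥ 2 be an integer, 0 < α ≤ 1, and q_s = α·s(n-s)/(n(n-1)) for 1 ≤ s ≤ n-1. Then for every integer 1 ≤ k ≤ n-1, (1/n)·∑_{s=1}^{n-1} q_s^{-1}·min(s,k)·(n - max(s,k)) = ((n-1)/α)·((n-k)(H_{n-1} - H_{n-k}) + k(H_{n-1} - H_{k-1})). -/
lemma H_succ (j : ℕ) : H (j + 1) = H j + 1 / ((j : ℝ) + 1) := by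
  simp [H, Finset.sum_range_succ]

lemma sum_inv_Icc (a b : ℕ) (h : a ≤ b) :
    ∑ s ∈ Finset.Icc (a + 1) b, (1 : ℝ) / s = H b - H a := by
  induction b, h using Nat.le_induction with
  | base => simp
  | succ b hb ih =>
    rw [Finset.sum_Icc_succ_top (by omega), ih, H_succ]
    push_cast
    ring

lemma sum_inv_sub (n k : ℕ) (hn : 1 ≤ n) (hk : k ≤ n - 1) :
    ∑ s ∈ Finset.Icc 1 k, (1 : ℝ) / ((n : ℝ) - s) = H (n - 1) - H (n - 1 - k) := by
  induction k with
  | zero => simp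
  | succ k ih =>
    rw [Finset.sum_Icc_succ_top (by omega), ih (by omega)]
    have h1 : n - 1 - k = (n - 1 - (k + 1)) + 1 := by omega
    have h2 : ((n - 1 - (k + 1) : ℕ) : ℝ) = (n : ℝ) - (k : ℝ) - 2 := by
      have h3 : n - 1 - (k + 1) = n - (k + 2) := by omega
      rw [h3, Nat.cast_sub (by omega)]
      push_cast
      ring
    rw [h1, H_succ, h2]
    push_cast
    ring

/-- The Glaz inversion formula for the unbiased birth-and-death chain on the clique:
`(1/n)·∑_{s=1}^{n-1} q_s⁻¹·min(s,k)·(n - max(s,k))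
  = ((n-1)/α)·((n-k)(H_{n-1} - H_{n-k}) + k(H_{n-1} - H_{k-1}))`,
where `q_s = α·s(n-s)/(n(n-1))`. -/
theorem stmt5 (n : ℕ) (hn : 2 ≤ n) (α : ℝ) (hα0 : 0 < α) (hα1 : α ≤ 1)
    (q : ℕ → ℝ)
    (hq : ∀ s : ℕ, 1 ≤ s → s ≤ n - 1 →
      q s = α * (s : ℝ) * ((n : ℝ) - (s : ℝ)) / ((n : ℝ) * ((n : ℝ) - 1)))
    (k : ℕ) (hk1 : 1 ≤ k) (hk : k ≤ n - 1) :
    (1 / (n : ℝ)) *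
        ∑ s ∈ Finset.Icc 1 (n - 1), (q s)⁻¹ * (min s k : ℝ) * ((n : ℝ) - (max s k : ℝ))
      = (((n : ℝ) - 1) / α) *
        (((n : ℝ) - (k : ℝ)) * (H (n - 1) - H (n - k)) + (k : ℝ) * (H (n - 1) - H (k - 1))) := by
  have hα : α ≠ 0 := ne_of_gt hα0
  have hn2 : (2 : ℝ) ≤ (n : ℝ) := by exact_mod_cast hn
  have hn0 : (n : ℝ) ≠ 0 := by linarith
  have hn1 : (n : ℝ) - 1 ≠ 0 := by linarith
  have hkR : (1 : ℝ) ≤ (k : ℝ) := by exact_mod_cast hk1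
  have hk0 : (k : ℝ) ≠ 0 := by linarith
  have hknN : k + 1 ≤ n := by omega
  have hknR : (k : ℝ) + 1 ≤ (n : ℝ) := by exact_mod_cast hknN
  have hnk : (n : ℝ) - (k : ℝ) ≠ 0 := by linarith
  have hsum : ∑ s ∈ Finset.Icc 1 (n - 1), (q s)⁻¹ * (min s k : ℝ) * ((n : ℝ) - (max s k : ℝ))
      = (n : ℝ) * (((n : ℝ) - 1) / α) *
        ∑ s ∈ Finset.Icc 1 (n - 1),
          (if s ≤ k then ((n : ℝ) - k) / ((n : ℝ) - s) else (k : ℝ) / s) := by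
    rw [Finset.mul_sum]
    apply Finset.sum_congr rfl
    intro s hs
    simp only [Finset.mem_Icc] at hs
    rw [hq s hs.1 hs.2]
    have hs1R : (1 : ℝ) ≤ (s : ℝ) := by exact_mod_cast hs.1
    have hs0 : (s : ℝ) ≠ 0 := by linarith
    have hsnN : s + 1 ≤ n := by omega
    have hsnR : (s : ℝ) + 1 ≤ (n : ℝ) := by exact_mod_cast hsnN
    have hns : (n : ℝ) - s ≠ 0 := by linarith
    by_cases hsk : s ≤ k
    · have hskR : (s : ℝ) ≤ (k : ℝ) := by exact_mod_cast hsk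
      rw [if_pos hsk, min_eq_left hskR, max_eq_right hskR]
      field_simp
    · have hksR : (k : ℝ) ≤ (s : ℝ) := by exact_mod_cast (by omega : k ≤ s)
      rw [if_neg hsk, min_eq_right hksR, max_eq_left hksR]
      field_simp
  rw [hsum]
  have hsplit : ∑ s ∈ Finset.Icc 1 (n - 1),
        (if s ≤ k then ((n : ℝ) - k) / ((n : ℝ) - s) else (k : ℝ) / s)
      = ((n : ℝ) - k) * (H (n - 1) - H (n - 1 - k)) + (k : ℝ) * (H (n - 1) - H k) := by
    have h1 : Finset.Icc 1 (n - 1) = Finset.Ioc 0 (n - 1) := by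
      rw [← Finset.Icc_add_one_left_eq_Ioc, zero_add]
    have h2 : Finset.Icc 1 k = Finset.Ioc 0 k := by
      rw [← Finset.Icc_add_one_left_eq_Ioc, zero_add]
    have h3 : Finset.Icc (k + 1) (n - 1) = Finset.Ioc k (n - 1) := by
      rw [← Finset.Icc_add_one_left_eq_Ioc]
    rw [h1, ← Finset.sum_Ioc_consecutive _ (Nat.zero_le k) hk, ← h2, ← h3]
    have e1 : ∑ s ∈ Finset.Icc 1 k,
          (if s ≤ k then ((n : ℝ) - k) / ((n : ℝ) - s) else (k : ℝ) / s)
        = ((n : ℝ) - k) * (H (n - 1) - H (n - 1 - k)) := by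
      rw [← sum_inv_sub n k (by omega) hk, Finset.mul_sum]
      apply Finset.sum_congr rfl
      intro s hs
      simp only [Finset.mem_Icc] at hs
      rw [if_pos hs.2]
      ring
    have e2 : ∑ s ∈ Finset.Icc (k + 1) (n - 1),
          (if s ≤ k then ((n : ℝ) - k) / ((n : ℝ) - s) else (k : ℝ) / s)
        = (k : ℝ) * (H (n - 1) - H k) := by
      rw [← sum_inv_Icc k (n - 1) hk, Finset.mul_sum]
      apply Finset.sum_congr rfl
      intro s hs
      simp only [Finset.mem_Icc] at hs
      rw [if_neg (by omega)]
      ring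
    rw [e1, e2]
  rw [hsplit]
  have e3 : H (n - k) = H (n - 1 - k) + 1 / ((n : ℝ) - k) := by
    have h1 : n - k = (n - 1 - k) + 1 := by omega
    have h2 : ((n - 1 - k : ℕ) : ℝ) + 1 = (n : ℝ) - k := by
      rw [show n - 1 - k = n - (k + 1) by omega, Nat.cast_sub (by omega)]
      push_cast
      ring
    rw [h1, H_succ, h2]
  have e4 : H k = H (k - 1) + 1 / (k : ℝ) := by
    have h1 : k = (k - 1) + 1 := by omega
    have h2 : ((k - 1 : ℕ) : ℝ) + 1 = (k : ℝ) := by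
      rw [Nat.cast_sub hk1]
      push_cast
      ring
    conv_lhs => rw [h1]
    rw [H_succ, h2]
  rw [e3, e4]
  field_simp
  ring
end

section
/- Let n ≥ 2 be an integer, let q_1,…,q_{n-1} be positive reals, let r > 0, and set p_i = r·q_i for i = 1,…,n-1. For integers 1 ≤ s,k ≤ n-1 write m(s,k) = min(s,k) and M(s,k) = n - max(s,k). Then [∑_{s=1}^{n-1} (∑_{ℓ=1}^{m(s,k)} ∏_{i=1}^{ℓ-1} q_i · ∏_{j=ℓ}^{s-1} p_j)·(∑_{ℓ=1}^{M(s,k)} ∏_{i=s+1}^{n-ℓ} q_i · ∏_{j=n-ℓ+1}^{n-1} p_j)] / [∑_{ℓ=1}^{n} ∏_{i=1}^{n-ℓ} q_i · ∏_{j=n-ℓ+1}^{n-1} p_j] = [∑_{s=1}^{n-1} q_s^{-1}·(∑_{ℓ=1}^{m(s,k)} r^{s-ℓ})·(∑_{ℓ=1}^{M(s,k)} r^{ℓ-1})] / [∑_{ℓ=1}^{n} r^{ℓ-1}]. -/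
open Finset in
private lemma key_prod (n : ℕ) (r : ℝ) (q p : ℕ → ℝ)
    (hp : ∀ i : ℕ, 1 ≤ i → i ≤ n - 1 → p i = r * q i)
    (a b c a' b' : ℕ) (ha : a' = a + 1) (hb : b' = b + 1)
    (hab : a ≤ b) (hbc : b ≤ c) (hc : c ≤ n - 1) :
    (∏ i ∈ Icc a' b, q i) * ∏ j ∈ Icc b' c, p j
      = r ^ (c - b) * ∏ i ∈ Ioc a c, q i := by
  subst ha hb
  rw [Finset.Icc_add_one_left_eq_Ioc, Finset.Icc_add_one_left_eq_Ioc]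
  have h1 : ∏ j ∈ Ioc b c, p j = r ^ (c - b) * ∏ j ∈ Ioc b c, q j := by
    rw [prod_congr rfl fun j hj => hp j (by simp only [Finset.mem_Ioc] at hj; omega)
      (by simp only [Finset.mem_Ioc] at hj; omega), prod_mul_distrib, prod_const,
      Nat.card_Ioc]
  rw [h1, ← mul_assoc, mul_comm (∏ i ∈ Ioc a b, q i) (r ^ (c - b)), mul_assoc,
    prod_Ioc_consecutive _ hab hbc]

/-- Glaz's explicit inversion formula for the expected absorption time of a
birth-and-death chain with up-probabilities `p_i = r·q_i` simplifies: the ratio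
of sums of products of the `p_i, q_i` reduces to an expression in `r` and the
`q_s` alone. Empty products equal 1 and empty sums equal 0. -/
theorem stmt6 (n : ℕ) (hn : 2 ≤ n) (r : ℝ) (hr : 0 < r)
    (q p : ℕ → ℝ)
    (hq : ∀ i : ℕ, 1 ≤ i → i ≤ n - 1 → 0 < q i)
    (hp : ∀ i : ℕ, 1 ≤ i → i ≤ n - 1 → p i = r * q i)
    (k : ℕ) (hk1 : 1 ≤ k) (hk : k ≤ n - 1) :
    (∑ s ∈ Finset.Icc 1 (n - 1),
        (∑ l ∈ Finset.Icc 1 (min s k),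
            (∏ i ∈ Finset.Icc 1 (l - 1), q i) * ∏ j ∈ Finset.Icc l (s - 1), p j) *
        (∑ l ∈ Finset.Icc 1 (n - max s k),
            (∏ i ∈ Finset.Icc (s + 1) (n - l), q i) *
              ∏ j ∈ Finset.Icc (n - l + 1) (n - 1), p j))
      / (∑ l ∈ Finset.Icc 1 n,
          (∏ i ∈ Finset.Icc 1 (n - l), q i) * ∏ j ∈ Finset.Icc (n - l + 1) (n - 1), p j)
    = (∑ s ∈ Finset.Icc 1 (n - 1),
        (q s)⁻¹ * (∑ l ∈ Finset.Icc 1 (min s k), r ^ (s - l)) *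
          ∑ l ∈ Finset.Icc 1 (n - max s k), r ^ (l - 1))
      / ∑ l ∈ Finset.Icc 1 n, r ^ (l - 1) := by
  have hQ : (∏ i ∈ Finset.Ioc 0 (n - 1), q i) ≠ 0 := by
    refine ne_of_gt (Finset.prod_pos fun i hi => ?_)
    simp only [Finset.mem_Ioc] at hi
    exact hq i hi.1 hi.2
  have hden : (∑ l ∈ Finset.Icc 1 n,
      (∏ i ∈ Finset.Icc 1 (n - l), q i) * ∏ j ∈ Finset.Icc (n - l + 1) (n - 1), p j)
      = (∏ i ∈ Finset.Ioc 0 (n - 1), q i) * ∑ l ∈ Finset.Icc 1 n, r ^ (l - 1) := by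
    rw [Finset.mul_sum]
    refine Finset.sum_congr rfl fun l hl => ?_
    simp only [Finset.mem_Icc] at hl
    rw [key_prod n r q p hp 0 (n - l) (n - 1) 1 (n - l + 1) rfl rfl (by omega) (by omega)
      le_rfl, show (n - 1) - (n - l) = l - 1 from by omega, mul_comm]
  have hnum : (∑ s ∈ Finset.Icc 1 (n - 1),
        (∑ l ∈ Finset.Icc 1 (min s k),
            (∏ i ∈ Finset.Icc 1 (l - 1), q i) * ∏ j ∈ Finset.Icc l (s - 1), p j) *
        (∑ l ∈ Finset.Icc 1 (n - max s k),
            (∏ i ∈ Finset.Icc (s + 1) (n - l), q i) *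
              ∏ j ∈ Finset.Icc (n - l + 1) (n - 1), p j))
      = (∏ i ∈ Finset.Ioc 0 (n - 1), q i) * ∑ s ∈ Finset.Icc 1 (n - 1),
        (q s)⁻¹ * (∑ l ∈ Finset.Icc 1 (min s k), r ^ (s - l)) *
          ∑ l ∈ Finset.Icc 1 (n - max s k), r ^ (l - 1) := by
    rw [Finset.mul_sum]
    refine Finset.sum_congr rfl fun s hs => ?_
    simp only [Finset.mem_Icc] at hs
    have hA : ∀ l ∈ Finset.Icc 1 (min s k),
        (∏ i ∈ Finset.Icc 1 (l - 1), q i) * ∏ j ∈ Finset.Icc l (s - 1), p j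
          = r ^ (s - l) * ∏ i ∈ Finset.Ioc 0 (s - 1), q i := by
      intro l hl; simp only [Finset.mem_Icc] at hl
      rw [key_prod n r q p hp 0 (l - 1) (s - 1) 1 l rfl (by omega) (by omega) (by omega)
        (by omega), show (s - 1) - (l - 1) = s - l from by omega]
    have hB : ∀ l ∈ Finset.Icc 1 (n - max s k),
        (∏ i ∈ Finset.Icc (s + 1) (n - l), q i) * ∏ j ∈ Finset.Icc (n - l + 1) (n - 1), p j
          = r ^ (l - 1) * ∏ i ∈ Finset.Ioc s (n - 1), q i := by
      intro l hl; simp only [Finset.mem_Icc] at hl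
      rw [key_prod n r q p hp s (n - l) (n - 1) (s + 1) (n - l + 1) rfl rfl (by omega)
        (by omega) le_rfl, show (n - 1) - (n - l) = l - 1 from by omega]
    rw [Finset.sum_congr rfl hA, Finset.sum_congr rfl hB, ← Finset.sum_mul, ← Finset.sum_mul]
    have hqs : q s ≠ 0 := ne_of_gt (hq s hs.1 hs.2)
    have hsplit : (∏ i ∈ Finset.Ioc 0 (s - 1), q i) * ∏ i ∈ Finset.Ioc s (n - 1), q i
        = (q s)⁻¹ * ∏ i ∈ Finset.Ioc 0 (n - 1), q i := by
      have h1 : (∏ i ∈ Finset.Ioc 0 (n - 1), q i)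
          = (∏ i ∈ Finset.Ioc 0 (s - 1), q i) * ∏ i ∈ Finset.Ioc (s - 1) (n - 1), q i :=
        (Finset.prod_Ioc_consecutive _ (by omega) (by omega)).symm
      have h2 : (∏ i ∈ Finset.Ioc (s - 1) (n - 1), q i)
          = q s * ∏ i ∈ Finset.Ioc s (n - 1), q i := by
        rw [show Finset.Ioc (s - 1) (n - 1) = Finset.Icc s (n - 1) by
            rw [← Finset.Icc_add_one_left_eq_Ioc]; congr 1; omega,
          Finset.Icc_eq_cons_Ioc (by omega : s ≤ n - 1), Finset.prod_cons]
      rw [eq_inv_mul_iff_mul_eq₀ hqs, h1, h2]; ring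
    linear_combination (∑ l ∈ Finset.Icc 1 (min s k), r ^ (s - l)) *
      (∑ l ∈ Finset.Icc 1 (n - max s k), r ^ (l - 1)) * hsplit
  rw [hnum, hden, mul_div_mul_left _ _ hQ]
end

section
/- Fix reals r ∈ (0,1) and α_{10} ∈ (0,1]. For integers n ≥ 2 and 1 ≤ k ≤ n-1 define T_k(n) = (n(n-1)/(α_{10}(1-r)(1-r^{n})))·∑_{s=1}^{n-1} (r^{max(0,s-k)} - r^{s})·(1 - r^{n-max(s,k)})/(s(n-s)). Then there exists a constant C > 0 (depending only on r and α_{10}) such that for all n ≥ 2 and all 1 ≤ k ≤ n-1, T_k(n) ≤ C·n·log n. -/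
set_option maxHeartbeats 1000000 in
/-- The exact expected consensus time `T_k(n)` of the biased asynchronous voter
model on the clique satisfies `T_k(n) ≤ C·n·log n` for a constant `C > 0`
depending only on `r` and `α₁₀`. -/
theorem stmt14 (r α10 : ℝ) (hr0 : 0 < r) (hr1 : r < 1) (hα0 : 0 < α10) (hα1 : α10 ≤ 1) :
    ∃ C > (0 : ℝ), ∀ n : ℕ, 2 ≤ n → ∀ k : ℕ, 1 ≤ k → k ≤ n - 1 →
      ((n : ℝ) * ((n : ℝ) - 1) / (α10 * (1 - r) * (1 - r ^ n))) *
          ∑ s ∈ Finset.Icc 1 (n - 1),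
            (r ^ (max (0 : ℤ) ((s : ℤ) - (k : ℤ))) - r ^ s) * (1 - r ^ (n - max s k)) /
              ((s : ℝ) * ((n : ℝ) - (s : ℝ)))
        ≤ C * (n : ℝ) * Real.log n := by
  have hlog2 : 0 < Real.log 2 := Real.log_pos (by norm_num)
  have hr1' : (0:ℝ) < 1 - r := by linarith
  have hD : 0 < α10 * (1 - r) ^ 2 := by positivity
  set D : ℝ := α10 * (1 - r) ^ 2 with hDdef
  refine ⟨(2 / D) * (1 + 1 / Real.log 2), by positivity, ?_⟩
  intro n hn k hk1 hk2
  have hn0 : (0:ℝ) < (n:ℝ) := by positivity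
  have hn2 : (2:ℝ) ≤ (n:ℝ) := by exact_mod_cast hn
  have hlogn : Real.log 2 ≤ Real.log n := Real.log_le_log (by norm_num) hn2
  have hlognpos : 0 < Real.log n := lt_of_lt_of_le hlog2 hlogn
  -- bound each summand by 1/(s*(n-s))
  have hterm : ∀ s ∈ Finset.Icc 1 (n-1),
      (r ^ (max (0 : ℤ) ((s : ℤ) - (k : ℤ))) - r ^ s) * (1 - r ^ (n - max s k)) /
        ((s : ℝ) * ((n : ℝ) - (s : ℝ)))
      ≤ 1 / ((s : ℝ) * ((n : ℝ) - (s : ℝ))) := by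
    intro s hs
    simp only [Finset.mem_Icc] at hs
    have hs1 : (1:ℝ) ≤ (s:ℝ) := by exact_mod_cast hs.1
    have hsn : s + 1 ≤ n := by omega
    have hns : (1:ℝ) ≤ (n:ℝ) - (s:ℝ) := by
      have : ((s:ℝ) + 1) ≤ (n:ℝ) := by exact_mod_cast hsn
      linarith
    have hden : 0 < (s : ℝ) * ((n : ℝ) - (s : ℝ)) := by nlinarith
    have hmax : (max (0 : ℤ) ((s : ℤ) - (k : ℤ))) = ((((s:ℤ) - (k:ℤ)).toNat : ℕ) : ℤ) := by
      rw [max_comm, ← Int.ofNat_toNat]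
    have hrw : r ^ (max (0 : ℤ) ((s : ℤ) - (k : ℤ))) = r ^ (((s:ℤ) - (k:ℤ)).toNat) := by
      rw [hmax, zpow_natCast]
    have hmle : ((s:ℤ) - (k:ℤ)).toNat ≤ s := by
      rw [Int.toNat_le]; omega
    have h1 : r ^ s ≤ r ^ (((s:ℤ) - (k:ℤ)).toNat) :=
      pow_le_pow_of_le_one hr0.le hr1.le hmle
    have h2 : r ^ (((s:ℤ) - (k:ℤ)).toNat) ≤ 1 := pow_le_one₀ hr0.le hr1.le
    have h3 : (0:ℝ) ≤ r ^ s := by positivity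
    have h4 : (0:ℝ) ≤ r ^ (n - max s k) := by positivity
    have h5 : r ^ (n - max s k) ≤ 1 := pow_le_one₀ hr0.le hr1.le
    rw [hrw]
    apply div_le_div₀ (by norm_num) ?_ hden le_rfl
    nlinarith
  have hsum1 : ∑ s ∈ Finset.Icc 1 (n - 1),
      (r ^ (max (0 : ℤ) ((s : ℤ) - (k : ℤ))) - r ^ s) * (1 - r ^ (n - max s k)) /
        ((s : ℝ) * ((n : ℝ) - (s : ℝ)))
      ≤ ∑ s ∈ Finset.Icc 1 (n-1), 1 / ((s : ℝ) * ((n : ℝ) - (s : ℝ))) :=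
    Finset.sum_le_sum hterm
  -- the reciprocal-product sum equals (1/n) * (sum 1/s + sum 1/(n-s))
  have hsplit : ∀ s ∈ Finset.Icc 1 (n-1),
      1 / ((s : ℝ) * ((n : ℝ) - (s : ℝ))) = (1/(s:ℝ) + 1/((n:ℝ)-(s:ℝ))) * (1/(n:ℝ)) := by
    intro s hs
    simp only [Finset.mem_Icc] at hs
    have hs1 : (1:ℝ) ≤ (s:ℝ) := by exact_mod_cast hs.1
    have hsn : s + 1 ≤ n := by omega
    have hns : (1:ℝ) ≤ (n:ℝ) - (s:ℝ) := by
      have : ((s:ℝ) + 1) ≤ (n:ℝ) := by exact_mod_cast hsn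
      linarith
    field_simp
    ring
  have hH : ∑ s ∈ Finset.Icc 1 (n-1), 1/(s:ℝ) ≤ 1 + Real.log n := by
    have h1 : ∑ s ∈ Finset.Icc 1 (n-1), 1/(s:ℝ) = ((harmonic (n-1) : ℚ) : ℝ) := by
      rw [harmonic_eq_sum_Icc]
      push_cast
      simp [one_div]
    rw [h1]
    refine (harmonic_le_one_add_log (n-1)).trans ?_
    have : Real.log ((n:ℝ)-1) ≤ Real.log n := by
      apply Real.log_le_log (by linarith) (by linarith)
    have hcast : ((n-1 : ℕ) : ℝ) = (n:ℝ) - 1 := by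
      have : 1 ≤ n := by omega
      push_cast [this]; ring
    rw [hcast]
    linarith
  have hH2 : ∑ s ∈ Finset.Icc 1 (n-1), 1/((n:ℝ)-(s:ℝ)) ≤ 1 + Real.log n := by
    have heq : ∑ s ∈ Finset.Icc 1 (n-1), 1/((n:ℝ)-(s:ℝ))
        = ∑ s ∈ Finset.Icc 1 (n-1), 1/(s:ℝ) := by
      refine Finset.sum_nbij' (fun s => n - s) (fun s => n - s) ?_ ?_ ?_ ?_ ?_
      · intro a ha; simp only [Finset.mem_Icc] at *; omega
      · intro a ha; simp only [Finset.mem_Icc] at *; omega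
      · intro a ha; simp only [Finset.mem_Icc] at *; omega
      · intro a ha; simp only [Finset.mem_Icc] at *; omega
      · intro a ha
        simp only [Finset.mem_Icc] at ha
        have han : a ≤ n := by omega
        have : ((n - a : ℕ) : ℝ) = (n:ℝ) - (a:ℝ) := by
          push_cast [han]; ring
        rw [this]
    rw [heq]; exact hH
  have hsumB : ∑ s ∈ Finset.Icc 1 (n-1), 1 / ((s : ℝ) * ((n : ℝ) - (s : ℝ)))
      ≤ (2 * (1 + Real.log n)) / n := by
    calc ∑ s ∈ Finset.Icc 1 (n-1), 1 / ((s : ℝ) * ((n : ℝ) - (s : ℝ)))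
        = (∑ s ∈ Finset.Icc 1 (n-1), (1/(s:ℝ) + 1/((n:ℝ)-(s:ℝ)))) * (1/(n:ℝ)) := by
          rw [Finset.sum_congr rfl hsplit, ← Finset.sum_mul]
      _ = (∑ s ∈ Finset.Icc 1 (n-1), 1/(s:ℝ)
            + ∑ s ∈ Finset.Icc 1 (n-1), 1/((n:ℝ)-(s:ℝ))) * (1/(n:ℝ)) := by
          rw [Finset.sum_add_distrib]
      _ ≤ ((1 + Real.log n) + (1 + Real.log n)) * (1/(n:ℝ)) :=
          mul_le_mul_of_nonneg_right (add_le_add hH hH2) (by positivity)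
      _ = (2 * (1 + Real.log n)) / n := by ring
  -- prefactor bound
  have hrn1 : r ^ n < 1 := pow_lt_one₀ hr0.le hr1 (by omega)
  have hrnr : r ^ n ≤ r := by
    calc r ^ n ≤ r ^ 1 := pow_le_pow_of_le_one hr0.le hr1.le (by omega)
    _ = r := pow_one r
  have hdenpos : 0 < α10 * (1 - r) * (1 - r ^ n) := by
    apply mul_pos (by positivity) (by linarith)
  have hP : (n : ℝ) * ((n : ℝ) - 1) / (α10 * (1 - r) * (1 - r ^ n))
      ≤ (n:ℝ) * (n:ℝ) / D := by
    apply div_le_div₀ (by positivity) (by nlinarith) hD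
    rw [hDdef]
    nlinarith
  have hPpos : 0 ≤ (n : ℝ) * ((n : ℝ) - 1) / (α10 * (1 - r) * (1 - r ^ n)) := by
    apply div_nonneg ?_ hdenpos.le
    nlinarith
  have hBnn : 0 ≤ (2 * (1 + Real.log n)) / n := by positivity
  calc ((n : ℝ) * ((n : ℝ) - 1) / (α10 * (1 - r) * (1 - r ^ n))) *
          ∑ s ∈ Finset.Icc 1 (n - 1),
            (r ^ (max (0 : ℤ) ((s : ℤ) - (k : ℤ))) - r ^ s) * (1 - r ^ (n - max s k)) /
              ((s : ℝ) * ((n : ℝ) - (s : ℝ)))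
      ≤ ((n : ℝ) * ((n : ℝ) - 1) / (α10 * (1 - r) * (1 - r ^ n))) *
          ((2 * (1 + Real.log n)) / n) := by
        exact mul_le_mul_of_nonneg_left (hsum1.trans hsumB) hPpos
    _ ≤ ((n:ℝ) * (n:ℝ) / D) * ((2 * (1 + Real.log n)) / n) :=
        mul_le_mul_of_nonneg_right hP hBnn
    _ = (2 / D) * (n:ℝ) * (1 + Real.log n) := by
        field_simp
    _ ≤ (2 / D) * (n:ℝ) * ((1 + 1 / Real.log 2) * Real.log n) := by
        apply mul_le_mul_of_nonneg_left ?_ (by positivity)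
        have h1 : 1 ≤ Real.log n / Real.log 2 := (one_le_div hlog2).mpr hlogn
        have : (1 + 1 / Real.log 2) * Real.log n = Real.log n + Real.log n / Real.log 2 := by
          field_simp
        rw [this]
        linarith
    _ = (2 / D) * (1 + 1 / Real.log 2) * (n:ℝ) * Real.log n := by ring
end

section
/- Fix reals r ∈ (0,1) and α_{10} ∈ (0,1]. For integers n ≥ 2 and 1 ≤ k ≤ n-1 define T_k(n) = (n(n-1)/(α_{10}(1-r)(1-r^{n})))·∑_{s=1}^{n-1} (r^{max(0,s-k)} - r^{s})·(1 - r^{n-max(s,k)})/(s(n-s)). Then there exist a constant c > 0 and an integer N such that for every odd n ≥ N, T_{(n+1)/2}(n) ≥ c·n·log n. -/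
lemma harm_log (k : ℕ) : Real.log (k + 1) ≤ ∑ s ∈ Finset.Icc 1 k, (1 : ℝ) / s := by
  induction k with
  | zero => simp
  | succ k ih =>
    rw [Finset.sum_Icc_succ_top (by omega)]
    have hk : (0:ℝ) < (k:ℝ) + 1 := by positivity
    have h1 : Real.log ((k:ℝ) + 1 + 1) - Real.log ((k:ℝ) + 1) ≤ 1 / ((k:ℝ) + 1) := by
      rw [← Real.log_div (by positivity) (by positivity)]
      have h := Real.log_le_sub_one_of_pos (x := (((k:ℝ) + 1 + 1) / ((k:ℝ) + 1))) (by positivity)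
      have : ((k:ℝ) + 1 + 1) / ((k:ℝ) + 1) - 1 = 1 / ((k:ℝ) + 1) := by field_simp; ring
      linarith
    push_cast
    push_cast at ih
    linarith

lemma alg3 (x A B L : ℝ) (hx : x ≠ 0) (hA : A ≠ 0) (hB : B ≠ 0) :
    B/(4*A) * (2*(x-1)) * L = (x*(x-1)/(A*B)) * ((B*B/x) * ((1/2)*L)) := by
  field_simp
  ring

set_option maxHeartbeats 1000000 in
/-- The `O(n log n)` upper bound on the expected consensus time of the biased
asynchronous voter model on the clique is asymptotically tight: for
`k = (n+1)/2` (with `n` odd), `T_k(n) ≥ c·n·log n` for all large enough `n`. -/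
theorem stmt15 (r α10 : ℝ) (hr0 : 0 < r) (hr1 : r < 1) (hα0 : 0 < α10) (hα1 : α10 ≤ 1) :
    ∃ c > (0 : ℝ), ∃ N : ℕ, ∀ n : ℕ, N ≤ n → Odd n →
      c * (n : ℝ) * Real.log n ≤
        ((n : ℝ) * ((n : ℝ) - 1) / (α10 * (1 - r) * (1 - r ^ n))) *
          ∑ s ∈ Finset.Icc 1 (n - 1),
            (r ^ (max (0 : ℤ) ((s : ℤ) - (((n + 1) / 2 : ℕ) : ℤ))) - r ^ s) *
                (1 - r ^ (n - max s ((n + 1) / 2))) /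
              ((s : ℝ) * ((n : ℝ) - (s : ℝ))) := by
  have hr1' : (0:ℝ) < 1 - r := by linarith
  refine ⟨(1 - r) / (4 * α10), by positivity, 5, ?_⟩
  intro n hn hodd
  set k := (n + 1) / 2 with hk
  obtain ⟨m, hm⟩ := hodd
  have h2k : 2 * k = n + 1 := by omega
  have hk_le : k ≤ n - 1 := by omega
  have hk1 : 1 ≤ k := by omega
  have hnk : 1 ≤ n - k := by omega
  have hnR : (5:ℝ) ≤ (n:ℝ) := by exact_mod_cast hn
  have hkR : (2:ℝ) * (k:ℝ) = (n:ℝ) + 1 := by exact_mod_cast h2k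
  have hlogn : (0:ℝ) ≤ Real.log n := Real.log_nonneg (by linarith)
  -- nonnegativity of each summand
  have hterm_nonneg : ∀ s ∈ Finset.Icc 1 (n-1), (0:ℝ) ≤
      (r ^ (max (0 : ℤ) ((s : ℤ) - (k : ℤ))) - r ^ s) * (1 - r ^ (n - max s k)) /
        ((s : ℝ) * ((n : ℝ) - (s : ℝ))) := by
    intro s hs
    rw [Finset.mem_Icc] at hs
    have hsR : (1:ℝ) ≤ (s:ℝ) := by exact_mod_cast hs.1
    have hsnR : (s:ℝ) + 1 ≤ (n:ℝ) := by exact_mod_cast (by omega : s + 1 ≤ n)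
    apply div_nonneg
    · apply mul_nonneg
      · have h1 : r ^ ((s:ℤ)) ≤ r ^ (max (0 : ℤ) ((s : ℤ) - (k : ℤ))) :=
          zpow_le_zpow_right_of_le_one₀ hr0 hr1.le (by omega)
        rw [zpow_natCast] at h1
        linarith
      · have := pow_le_one₀ hr0.le hr1.le (n := n - max s k)
        linarith
    · have : (0:ℝ) ≤ (n:ℝ) - (s:ℝ) := by linarith
      positivity
  -- lower bound of each summand for s ≤ k
  have hterm_lb : ∀ s ∈ Finset.Icc 1 k, (1-r)*(1-r) / ((s:ℝ) * (n:ℝ)) ≤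
      (r ^ (max (0 : ℤ) ((s : ℤ) - (k : ℤ))) - r ^ s) * (1 - r ^ (n - max s k)) /
        ((s : ℝ) * ((n : ℝ) - (s : ℝ))) := by
    intro s hs
    rw [Finset.mem_Icc] at hs
    have hsR : (1:ℝ) ≤ (s:ℝ) := by exact_mod_cast hs.1
    have hsnR : (s:ℝ) + 1 ≤ (n:ℝ) := by
      have : s + 1 ≤ n := by omega
      exact_mod_cast this
    have hmax0 : max (0 : ℤ) ((s : ℤ) - (k : ℤ)) = 0 := by omega
    have hmaxsk : max s k = k := max_eq_right hs.2
    rw [hmax0, hmaxsk, zpow_zero]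
    have h1 : r ^ s ≤ r := by
      have := pow_le_pow_of_le_one hr0.le hr1.le hs.1
      simpa using this
    have h2 : r ^ (n - k) ≤ r := by
      have := pow_le_pow_of_le_one hr0.le hr1.le hnk
      simpa using this
    apply div_le_div₀
    · apply mul_nonneg <;> nlinarith [pow_le_one₀ hr0.le hr1.le (n := s), pow_le_one₀ hr0.le hr1.le (n := n - k)]
    · apply mul_le_mul (by linarith) (by linarith) (by linarith) (by linarith)
    · nlinarith
    · nlinarith
  set S := ∑ s ∈ Finset.Icc 1 (n-1),
      (r ^ (max (0 : ℤ) ((s : ℤ) - (k : ℤ))) - r ^ s) * (1 - r ^ (n - max s k)) /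
        ((s : ℝ) * ((n : ℝ) - (s : ℝ))) with hS
  have hS1 : ((1-r)*(1-r)/(n:ℝ)) * Real.log ((k:ℝ)+1) ≤ S := by
    calc ((1-r)*(1-r)/(n:ℝ)) * Real.log ((k:ℝ)+1)
        ≤ ((1-r)*(1-r)/(n:ℝ)) * ∑ s ∈ Finset.Icc 1 k, (1:ℝ)/s := by
          apply mul_le_mul_of_nonneg_left _ (by positivity)
          exact_mod_cast harm_log k
      _ = ∑ s ∈ Finset.Icc 1 k, (1-r)*(1-r)/((s:ℝ)*(n:ℝ)) := by
          rw [Finset.mul_sum]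
          apply Finset.sum_congr rfl
          intro s hs
          rw [Finset.mem_Icc] at hs
          have hs0 : (0:ℝ) < (s:ℝ) := by exact_mod_cast hs.1
          field_simp
      _ ≤ ∑ s ∈ Finset.Icc 1 k,
            (r ^ (max (0 : ℤ) ((s : ℤ) - (k : ℤ))) - r ^ s) * (1 - r ^ (n - max s k)) /
              ((s : ℝ) * ((n : ℝ) - (s : ℝ))) := Finset.sum_le_sum hterm_lb
      _ ≤ S := Finset.sum_le_sum_of_subset_of_nonneg
          (Finset.Icc_subset_Icc_right hk_le) (fun s hs _ => hterm_nonneg s hs)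
  -- log bound
  have hlog : (1/2) * Real.log (n:ℝ) ≤ Real.log ((k:ℝ)+1) := by
    have h1 : Real.log ((n:ℝ)/2) ≤ Real.log ((k:ℝ)+1) :=
      Real.log_le_log (by linarith) (by linarith)
    rw [Real.log_div (by linarith) (by norm_num)] at h1
    have h4 : Real.log 4 ≤ Real.log (n:ℝ) := Real.log_le_log (by norm_num) (by linarith)
    have h42 : Real.log 4 = 2 * Real.log 2 := by
      rw [show (4:ℝ) = 2^2 by norm_num, Real.log_pow]; push_cast; ring
    linarith
  -- prefactor bound
  have hrn : r ^ n < 1 := pow_lt_one₀ hr0.le hr1 (by omega)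
  have hrn0 : (0:ℝ) < 1 - r ^ n := by linarith
  have hnn : (0:ℝ) ≤ (n:ℝ)*((n:ℝ)-1) := by nlinarith
  have hP : (n:ℝ)*((n:ℝ)-1)/(α10*(1-r)) ≤ (n:ℝ)*((n:ℝ)-1)/(α10*(1-r)*(1-r^n)) := by
    apply div_le_div_of_nonneg_left hnn (by positivity)
    exact mul_le_of_le_one_right (by positivity) (by nlinarith [pow_pos hr0 n])
  have hlogk : (0:ℝ) ≤ Real.log ((k:ℝ)+1) := by linarith
  have hmid_nonneg : (0:ℝ) ≤ ((1-r)*(1-r)/(n:ℝ)) * Real.log ((k:ℝ)+1) := by positivity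
  set L := Real.log (n:ℝ) with hL
  have step1 : (1 - r) / (4 * α10) * (n:ℝ) * L ≤
      ((n:ℝ)*((n:ℝ)-1)/(α10*(1-r))) * (((1-r)*(1-r)/(n:ℝ)) * ((1/2) * L)) := by
    have h1 : (1-r)/(4*α10) * (n:ℝ) ≤ (1-r)/(4*α10) * (2*((n:ℝ)-1)) :=
      mul_le_mul_of_nonneg_left (by linarith) (by positivity)
    have h2 := mul_le_mul_of_nonneg_right h1 hlogn
    have h3 := alg3 (n:ℝ) α10 (1-r) L (by linarith) (by linarith) (by linarith)
    linarith
  calc (1 - r) / (4 * α10) * (n:ℝ) * L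
      ≤ ((n:ℝ)*((n:ℝ)-1)/(α10*(1-r))) * (((1-r)*(1-r)/(n:ℝ)) * ((1/2) * L)) := step1
    _ ≤ ((n:ℝ)*((n:ℝ)-1)/(α10*(1-r))) * (((1-r)*(1-r)/(n:ℝ)) * Real.log ((k:ℝ)+1)) := by
        apply mul_le_mul_of_nonneg_left _ (by positivity)
        exact mul_le_mul_of_nonneg_left hlog (by positivity)
    _ ≤ ((n:ℝ)*((n:ℝ)-1)/(α10*(1-r)*(1-r^n))) * S :=
        mul_le_mul hP hS1 hmid_nonneg (by positivity)
end

section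
/- Let n ≥ 3 be an odd integer, 0 < r < 1, set k = (n+1)/2, and define S1 and S2 as follows: S1 = (1 - r^{n-k})·(∑_{s=1}^{k-1} 1/(s(n-s)) - ∑_{s=1}^{k-1} r^{s}/(s(n-s))) and S2 = (r^{-k} - 1)·(r^{n}·∑_{s=k}^{n-1} 1/(s(n-s)) - ∑_{s=k}^{n-1} r^{s}/(s(n-s))). Then n·(S1 - S2) > (1 - 2r^{(n-1)/2})·H_{n-1} + 2(1 - r^{n})·log(1 - r) + 2(1 - r^{n})/n. -/
open Finset

lemma sum_Ioc_zero_eq (mm : ℕ) (g : ℕ → ℝ) :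
    ∑ s ∈ Ioc 0 mm, g s = ∑ i ∈ range mm, g (i+1) := by
  induction mm with
  | zero => simp
  | succ p ih =>
      rw [← Finset.Icc_add_one_left_eq_Ioc] at ih ⊢
      rw [Finset.sum_Icc_succ_top (by omega), ih, Finset.sum_range_succ]

lemma sum_reflect (m : ℕ) (g : ℕ → ℝ) :
    ∑ s ∈ Ioc m (2*m), g s = ∑ s ∈ Ioc 0 m, g (2*m+1 - s) := by
  apply Finset.sum_nbij' (i := fun s => 2*m+1 - s) (j := fun s => 2*m+1 - s)
  · intro a ha; simp only [mem_Ioc] at *; omega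
  · intro a ha; simp only [mem_Ioc] at *; omega
  · intro a ha; simp only [mem_Ioc] at ha; omega
  · intro a ha; simp only [mem_Ioc] at ha; omega
  · intro a ha; simp only [mem_Ioc] at ha; congr 1; omega

lemma log_partial {r : ℝ} (hr0 : 0 < r) (hr1 : r < 1) (M : ℕ) :
    ∑ i ∈ range M, r^(i+1)/((i:ℝ)+1) ≤ -Real.log (1-r) := by
  apply sum_le_hasSum (L := SummationFilter.unconditional ℕ)
  · intro i _; positivity
  · exact Real.hasSum_pow_div_log_of_abs_lt_one (by rw [abs_of_pos hr0]; exact hr1)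


lemma final_ineq (mR A1 A2 L t1 t2 HH x u y : ℝ)
    (hmR : 1 ≤ mR) (hx0 : 0 < x) (hx1 : x ≤ 1) (hy1 : y < 1)
    (hyu : y ≤ u) (hu1 : u ≤ 1) (hxxy : x*x ≤ y) (hy0 : 0 < y)
    (hA1 : 0 ≤ A1) (hA2 : 0 ≤ A2) (hA21 : A2 ≤ A1) (hH : 0 ≤ HH)
    (hL : A1 + x/(mR+1) ≤ L)
    (hT1 : (1-x)/(mR+1) ≤ t1) (hT2 : (1-x)/mR ≤ t2) :
    (1 - 2*u + y)*HH - (1-u)*(A1+A2) + (t1 + t2)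
      > (1-2*u)*HH + 2*(1-y)*(-L) + 2*(1-y)/(2*mR+1) := by
  have hden1 : (0:ℝ) < mR := by linarith
  have hden2 : (0:ℝ) < mR+1 := by linarith
  have hden3 : (0:ℝ) < 2*mR+1 := by linarith
  have hcore : 2*(1-y)/(2*mR+1) ≤ (1-x)/(mR+1) + (1-x)/mR := by
    rw [div_add_div _ _ (ne_of_gt hden2) (ne_of_gt hden1),
      div_le_div_iff₀ hden3 (by positivity)]
    have key1 : 0 ≤ (y - x*x) * (mR*(mR+1)) := mul_nonneg (by linarith) (by positivity)
    have key2 : 0 ≤ (1-x)*(1-x) * (mR*(mR+1)) :=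
      mul_nonneg (mul_nonneg (by linarith) (by linarith)) (by positivity)
    nlinarith [key1, key2, hx1]
  have f1 : 0 ≤ y * HH := mul_nonneg hy0.le hH
  have f2 : 0 ≤ (1-y) * (L - (A1 + x/(mR+1))) :=
    mul_nonneg (by linarith) (by linarith)
  have f3 : 0 ≤ (1-u) * (A1 - A2) := mul_nonneg (by linarith) (by linarith)
  have f3' : 0 ≤ (u - y) * (A1 + A1) := mul_nonneg (by linarith) (by linarith)
  have f6 : 0 < (1-y) * (x/(mR+1)) := mul_pos (by linarith) (by positivity)
  nlinarith [f1, f2, f3, f3', f6, hT1, hT2, hcore]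

set_option maxHeartbeats 1000000 in
/-- For odd `n ≥ 3` and `k = (n+1)/2`, the quantity `n·(S1 - S2)` is bounded
below by `(1 - 2r^{(n-1)/2})·H_{n-1} + 2(1 - r^n)·log(1-r) + 2(1 - r^n)/n`. -/
theorem stmt16 (n : ℕ) (hn : 3 ≤ n) (hodd : Odd n)
    (r : ℝ) (hr0 : 0 < r) (hr1 : r < 1)
    (k : ℕ) (hk : k = (n + 1) / 2)
    (S1 S2 : ℝ)
    (hS1 : S1 = (1 - r ^ (n - k)) *
      ((∑ s ∈ Finset.Icc 1 (k - 1), (1 : ℝ) / ((s : ℝ) * ((n : ℝ) - (s : ℝ))))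
        - ∑ s ∈ Finset.Icc 1 (k - 1), r ^ s / ((s : ℝ) * ((n : ℝ) - (s : ℝ)))))
    (hS2 : S2 = (r ^ (-(k : ℤ)) - 1) *
      (r ^ n * (∑ s ∈ Finset.Icc k (n - 1), (1 : ℝ) / ((s : ℝ) * ((n : ℝ) - (s : ℝ))))
        - ∑ s ∈ Finset.Icc k (n - 1), r ^ s / ((s : ℝ) * ((n : ℝ) - (s : ℝ))))) :
    (n : ℝ) * (S1 - S2)
      > (1 - 2 * r ^ ((n - 1) / 2)) * H (n - 1)
        + 2 * (1 - r ^ n) * Real.log (1 - r)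
        + 2 * (1 - r ^ n) / (n : ℝ) := by
  obtain ⟨m, hm⟩ := hodd
  subst hm
  have hm1 : 1 ≤ m := by omega
  have hkm : k = m + 1 := by omega
  subst hkm
  clear hk hn
  -- index simplifications
  have ei1 : m + 1 - 1 = m := rfl
  have ei2 : 2*m + 1 - 1 = 2*m := by omega
  have ei3 : 2*m + 1 - (m + 1) = m := by omega
  have ei4 : (2*m + 1 - 1)/2 = m := by omega
  have eIcc1 : Finset.Icc 1 m = Ioc 0 m := by ext a; simp only [mem_Icc, mem_Ioc]; omega
  have eIcc2 : Finset.Icc (m+1) (2*m) = Ioc m (2*m) := by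
    ext a; simp only [mem_Icc, mem_Ioc]; omega
  rw [ei1, ei3, eIcc1] at hS1
  rw [ei2, eIcc2] at hS2
  rw [ei4, ei2]
  -- notation
  set nr : ℝ := ((2*m+1 : ℕ) : ℝ) with hnr
  have hnrv : nr = 2*(m:ℝ)+1 := by rw [hnr]; push_cast; ring
  set L : ℝ := -Real.log (1-r) with hL
  have hr0' : (0:ℝ) ≤ r := hr0.le
  have hr1' : r ≤ 1 := hr1.le
  -- cast bounds for indices
  have hsb : ∀ s ∈ Ioc 0 (2*m), (0:ℝ) < (s:ℝ) ∧ (s:ℝ) < nr := by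
    intro s hs
    simp only [mem_Ioc] at hs
    constructor
    · exact_mod_cast hs.1
    · rw [hnrv]
      have h2' : (s:ℝ) ≤ 2*(m:ℝ) := by exact_mod_cast hs.2
      linarith
  -- the six sums
  set A1 : ℝ := ∑ s ∈ Ioc 0 m, r^s/(s:ℝ) with hA1
  set A2 : ℝ := ∑ s ∈ Ioc 0 m, r^s/(nr - (s:ℝ)) with hA2
  set C1 : ℝ := ∑ s ∈ Ioc m (2*m), r^s/(s:ℝ) with hC1
  set C2 : ℝ := ∑ s ∈ Ioc m (2*m), r^s/(nr - (s:ℝ)) with hC2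
  set G1 : ℝ := ∑ s ∈ Ioc m (2*m), r^(s-(m+1))/(s:ℝ) with hG1
  set G2 : ℝ := ∑ s ∈ Ioc m (2*m), r^(s-(m+1))/(nr - (s:ℝ)) with hG2
  set HH : ℝ := H (2*m) with hHH
  have hsub1 : Ioc 0 m ⊆ Ioc 0 (2*m) := by intro a; simp only [mem_Ioc]; omega
  have hsub2 : Ioc m (2*m) ⊆ Ioc 0 (2*m) := by intro a; simp only [mem_Ioc]; omega
  -- partial fraction identity, generic
  have pf : ∀ (T : Finset ℕ), T ⊆ Ioc 0 (2*m) → ∀ (f : ℕ → ℝ),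
      nr * (∑ s ∈ T, f s / ((s:ℝ) * (nr - (s:ℝ))))
        = ∑ s ∈ T, f s/(s:ℝ) + ∑ s ∈ T, f s/(nr - (s:ℝ)) := by
    intro T hT f
    rw [Finset.mul_sum, ← Finset.sum_add_distrib]
    apply Finset.sum_congr rfl
    intro s hs
    obtain ⟨h1, h2⟩ := hsb s (hT hs)
    have h3 : nr - (s:ℝ) > 0 := by linarith
    field_simp
    ring
  -- H as an Ioc sum
  have hHIoc : ∀ M : ℕ, H M = ∑ s ∈ Ioc 0 M, (1:ℝ)/(s:ℝ) := by
    intro M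
    rw [sum_Ioc_zero_eq M (fun s => (1:ℝ)/(s:ℝ)), H]
    apply Finset.sum_congr rfl
    intro i _
    push_cast
    ring
  -- reflection for the constant-1 sums
  have hrefl1 : ∑ s ∈ Ioc m (2*m), (1:ℝ)/(s:ℝ) = ∑ s ∈ Ioc 0 m, (1:ℝ)/(nr - (s:ℝ)) := by
    rw [sum_reflect m (fun s => (1:ℝ)/(s:ℝ))]
    apply Finset.sum_congr rfl
    intro s hs
    simp only [mem_Ioc] at hs
    congr 1
    rw [hnrv]
    have : ((2*m+1-s : ℕ):ℝ) = 2*(m:ℝ)+1 - (s:ℝ) := by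
      have hs2 : s ≤ 2*m+1 := by omega
      push_cast [hs2]; ring
    rw [this]
  have hrefl2 : ∑ s ∈ Ioc m (2*m), (1:ℝ)/(nr - (s:ℝ)) = ∑ s ∈ Ioc 0 m, (1:ℝ)/(s:ℝ) := by
    rw [sum_reflect m (fun s => (1:ℝ)/(nr - (s:ℝ)))]
    apply Finset.sum_congr rfl
    intro s hs
    simp only [mem_Ioc] at hs
    congr 1
    rw [hnrv]
    have hs2 : s ≤ 2*m+1 := by omega
    push_cast [hs2]
    ring
  have hsplit : ∑ s ∈ Ioc 0 m, (1:ℝ)/(s:ℝ) + ∑ s ∈ Ioc m (2*m), (1:ℝ)/(s:ℝ)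
      = ∑ s ∈ Ioc 0 (2*m), (1:ℝ)/(s:ℝ) :=
    Finset.sum_Ioc_consecutive _ (by omega) (by omega)
  -- the four n*(sum) identities
  have hA : nr * (∑ s ∈ Ioc 0 m, (1:ℝ) / ((s:ℝ) * (nr - (s:ℝ)))) = HH := by
    rw [pf _ hsub1 (fun _ => (1:ℝ)), ← hrefl1, hsplit, hHH, hHIoc]
  have hC : nr * (∑ s ∈ Ioc m (2*m), (1:ℝ) / ((s:ℝ) * (nr - (s:ℝ)))) = HH := by
    rw [pf _ hsub2 (fun _ => (1:ℝ)), hrefl2, hHH, hHIoc, ← hsplit]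
    ring
  have hB : nr * (∑ s ∈ Ioc 0 m, r^s / ((s:ℝ) * (nr - (s:ℝ)))) = A1 + A2 :=
    pf _ hsub1 (fun s => r^s)
  have hD : nr * (∑ s ∈ Ioc m (2*m), r^s / ((s:ℝ) * (nr - (s:ℝ)))) = C1 + C2 :=
    pf _ hsub2 (fun s => r^s)
  -- zpow shifts
  have hzpow : ∀ s ∈ Ioc m (2*m), r ^ (-((m+1:ℕ):ℤ)) * r^s = r^(s-(m+1)) := by
    intro s hs
    simp only [mem_Ioc] at hs
    rw [← zpow_natCast r s, ← zpow_add₀ (ne_of_gt hr0), ← zpow_natCast r (s-(m+1))]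
    congr 1
    omega
  have hzG1 : r ^ (-((m+1:ℕ):ℤ)) * C1 = G1 := by
    rw [hC1, hG1, Finset.mul_sum]
    apply Finset.sum_congr rfl
    intro s hs
    rw [← mul_div_assoc, hzpow s hs]
  have hzG2 : r ^ (-((m+1:ℕ):ℤ)) * C2 = G2 := by
    rw [hC2, hG2, Finset.mul_sum]
    apply Finset.sum_congr rfl
    intro s hs
    rw [← mul_div_assoc, hzpow s hs]
  have hzrk : r ^ (-((m+1:ℕ):ℤ)) * r^(2*m+1) = r^m := by
    rw [← zpow_natCast r (2*m+1), ← zpow_add₀ (ne_of_gt hr0), ← zpow_natCast r m]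
    congr 1
    omega
  -- the main algebraic identity
  have hId : nr * (S1 - S2) = (1 - 2*r^m + r^(2*m+1)) * HH
      - (1 - r^m) * (A1 + A2) + ((G1 - C1) + (G2 - C2)) := by
    rw [hS1, hS2]
    linear_combination (1 - r^m) * hA - (1 - r^m) * hB
      + (r^(2*m+1) - r ^ (-((m+1:ℕ):ℤ)) * r^(2*m+1)) * hC
      + (r ^ (-((m+1:ℕ):ℤ)) - 1) * hD - HH * hzrk + hzG1 + hzG2
  rw [hId]
  -- now the inequality; abbreviations
  set x : ℝ := r^(m+1) with hx
  set u : ℝ := r^m with hu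
  set y : ℝ := r^(2*m+1) with hy
  have hx0 : 0 < x := by positivity
  have hx1 : x ≤ 1 := pow_le_one₀ hr0' hr1'
  have hu1 : u ≤ 1 := pow_le_one₀ hr0' hr1'
  have hy1 : y < 1 := pow_lt_one₀ hr0' hr1 (by omega)
  have hyx : y ≤ x := pow_le_pow_of_le_one hr0' hr1' (by omega)
  have hyu : y ≤ u := pow_le_pow_of_le_one hr0' hr1' (by omega)
  have hxu : x ≤ u := pow_le_pow_of_le_one hr0' hr1' (by omega)
  have hxxy : x * x ≤ y := by
    rw [hx, hy, ← pow_add]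
    exact pow_le_pow_of_le_one hr0' hr1' (by omega)
  have hy0 : 0 < y := by positivity
  -- positivity of sums
  have hA1pos : 0 ≤ A1 := by
    apply Finset.sum_nonneg; intro s _; positivity
  have hA2pos : 0 ≤ A2 := by
    apply Finset.sum_nonneg
    intro s hs
    have := (hsb s (hsub1 hs)).2
    have h0 := (hsb s (hsub1 hs)).1
    have : (0:ℝ) < nr - s := by linarith
    positivity
  have hHpos : 0 ≤ HH := by
    rw [hHH, H]; apply Finset.sum_nonneg; intro i _; positivity
  -- A2 ≤ A1
  have hA21 : A2 ≤ A1 := by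
    rw [hA1, hA2]
    apply Finset.sum_le_sum
    intro s hs
    simp only [mem_Ioc] at hs
    have h1 : (0:ℝ) < (s:ℝ) := by exact_mod_cast hs.1
    have h2 : (s:ℝ) ≤ nr - (s:ℝ) := by
      rw [hnrv]
      have : (s:ℝ) ≤ (m:ℝ) := by exact_mod_cast hs.2
      linarith
    apply div_le_div_of_nonneg_left (by positivity) h1 h2
  -- log lower bound: A1 + x/(m+1) ≤ L
  have hLb : A1 + x/((m:ℝ)+1) ≤ L := by
    have h := log_partial hr0 hr1 (m+1)
    rw [Finset.sum_range_succ] at h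
    have hconv : A1 = ∑ i ∈ range m, r^(i+1)/((i:ℝ)+1) := by
      rw [hA1, sum_Ioc_zero_eq m (fun s => r^s/(s:ℝ))]
      apply Finset.sum_congr rfl
      intro i _
      push_cast
      ring
    rw [hL, hconv, hx]
    exact h
  -- single-term lower bounds on G1-C1 and G2-C2
  have hmem : m+1 ∈ Ioc m (2*m) := by simp only [mem_Ioc]; omega
  have hT1 : (1-x)/((m:ℝ)+1) ≤ G1 - C1 := by
    have e : G1 - C1 = ∑ s ∈ Ioc m (2*m), (r^(s-(m+1)) - r^s)/(s:ℝ) := by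
      rw [hG1, hC1, ← Finset.sum_sub_distrib]
      apply Finset.sum_congr rfl
      intro s _
      rw [sub_div]
    rw [e]
    have h := Finset.single_le_sum (f := fun s => (r^(s-(m+1)) - r^s)/(s:ℝ))
      (fun s hs => by
        simp only [mem_Ioc] at hs
        have h1 : (0:ℝ) < (s:ℝ) := by
          have : 0 < s := by omega
          exact_mod_cast this
        have h2 : r^s ≤ r^(s-(m+1)) := pow_le_pow_of_le_one hr0' hr1' (by omega)
        apply div_nonneg (by linarith) h1.le) hmem
    calc (1-x)/((m:ℝ)+1) = (r^(m+1-(m+1)) - r^(m+1))/((m+1:ℕ):ℝ) := by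
          rw [Nat.sub_self, pow_zero, hx]; push_cast; ring
      _ ≤ _ := h
  have hT2 : (1-x)/(m:ℝ) ≤ G2 - C2 := by
    have e : G2 - C2 = ∑ s ∈ Ioc m (2*m), (r^(s-(m+1)) - r^s)/(nr - (s:ℝ)) := by
      rw [hG2, hC2, ← Finset.sum_sub_distrib]
      apply Finset.sum_congr rfl
      intro s _
      rw [sub_div]
    rw [e]
    have h := Finset.single_le_sum (f := fun s => (r^(s-(m+1)) - r^s)/(nr - (s:ℝ)))
      (fun s hs => by
        have h1 := (hsb s (hsub2 hs)).2
        have h1' : (0:ℝ) < nr - (s:ℝ) := by linarith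
        simp only [mem_Ioc] at hs
        have h2 : r^s ≤ r^(s-(m+1)) := pow_le_pow_of_le_one hr0' hr1' (by omega)
        apply div_nonneg (by linarith) h1'.le) hmem
    calc (1-x)/(m:ℝ) = (r^(m+1-(m+1)) - r^(m+1))/(nr - ((m+1:ℕ):ℝ)) := by
          rw [Nat.sub_self, pow_zero, hx, hnrv]; push_cast; ring
      _ ≤ _ := h
  have hmR : (1:ℝ) ≤ (m:ℝ) := by exact_mod_cast hm1
  have hlog : Real.log (1-r) = -L := by rw [hL]; ring
  rw [hlog, hnrv]
  have FI := final_ineq (m:ℝ) A1 A2 L (G1-C1) (G2-C2) HH x u y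
    hmR hx0 hx1 hy1 hyu hu1 hxxy hy0 hA1pos hA2pos hA21 hHpos hLb hT1 hT2
  linarith [FI]
end

section
/- Let n ≥ 1 be an integer and m ≥ 1 a real number. Then ∑_{t=0}^{∞} min(1, n·e^{-(t-1)/m}) < 2 + m·log n + m. -/
open Real Finset

/-- `∑_{t=0}^∞ min(1, n·e^{-(t-1)/m}) < 2 + m·log n + m` for integers `n ≥ 1`
and reals `m ≥ 1`. -/
theorem stmt17 (n : ℕ) (hn : 1 ≤ n) (m : ℝ) (hm : 1 ≤ m) :
    ∑' t : ℕ, min (1 : ℝ) ((n : ℝ) * Real.exp (-(((t : ℝ) - 1) / m)))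
      < 2 + m * Real.log n + m := by
  have hm0 : (0:ℝ) < m := lt_of_lt_of_le one_pos hm
  have hn0 : (0:ℝ) < n := by exact_mod_cast hn
  set q : ℝ := Real.exp (-(1/m)) with hq
  have hq0 : 0 < q := Real.exp_pos _
  have hq1 : q < 1 := Real.exp_lt_one_iff.mpr (neg_lt_zero.mpr (by positivity))
  set C : ℝ := (n:ℝ) * Real.exp (1/m) with hC
  have hC0 : 0 < C := by positivity
  set f : ℕ → ℝ := fun t => min (1:ℝ) ((n : ℝ) * Real.exp (-(((t : ℝ) - 1) / m))) with hf
  have hid : ∀ t : ℕ, (n : ℝ) * Real.exp (-(((t : ℝ) - 1) / m)) = C * q ^ t := by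
    intro t
    rw [hC, hq, ← Real.exp_nat_mul, mul_assoc, ← Real.exp_add]
    congr 1
    field_simp
    ring
  have hf_nonneg : ∀ t, 0 ≤ f t := fun t =>
    le_min zero_le_one (by positivity)
  have hf_le : ∀ t, f t ≤ C * q ^ t := fun t => by
    rw [← hid t]; exact min_le_right _ _
  have hgsum : Summable (fun t : ℕ => C * q ^ t) :=
    (summable_geometric_of_lt_one hq0.le hq1).mul_left C
  have hfsum : Summable f := Summable.of_nonneg_of_le hf_nonneg hf_le hgsum
  set L : ℝ := m * Real.log n with hL
  have hL0 : 0 ≤ L := mul_nonneg hm0.le (Real.log_nonneg (by exact_mod_cast hn))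
  set K : ℕ := ⌊L⌋₊ + 2 with hK
  set θ : ℝ := (⌊L⌋₊ : ℝ) + 1 - L with hθ
  have hθ0 : 0 < θ := by
    have := Nat.lt_floor_add_one L
    simp only [hθ]; linarith
  have hθ1 : θ ≤ 1 := by
    have := Nat.floor_le hL0
    simp only [hθ]; linarith
  -- split the sum
  have hsplit := hfsum.sum_add_tsum_nat_add K
  -- head bound
  have hhead : ∑ t ∈ range K, f t ≤ (K : ℝ) := by
    calc ∑ t ∈ range K, f t ≤ ∑ t ∈ range K, (1:ℝ) :=
          Finset.sum_le_sum (fun i _ => min_le_left _ _)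
      _ = K := by simp
  -- key: C * q ^ K = exp (-θ/m)
  have hCK : C * q ^ K = Real.exp (-θ/m) := by
    rw [hC, hq, ← Real.exp_nat_mul, mul_assoc, ← Real.exp_add]
    nth_rewrite 1 [show (n:ℝ) = Real.exp (Real.log n) from (Real.exp_log hn0).symm]
    rw [← Real.exp_add]
    congr 1
    have hlog : Real.log n = L / m := by rw [hL]; field_simp
    rw [hlog, hθ, hK]
    push_cast
    field_simp
    ring
  -- convexity: exp(-θ/m) ≤ (1-θ) + θ*q
  have hconv : Real.exp (-θ/m) ≤ (1 - θ) + θ * q := by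
    have h := convexOn_exp.2 (Set.mem_univ (0:ℝ)) (Set.mem_univ (-(1/m)))
      (by linarith : (0:ℝ) ≤ 1 - θ) hθ0.le (by ring)
    simp only [smul_eq_mul, mul_zero, zero_add, Real.exp_zero, mul_one] at h
    have : (1 - θ) * 0 + θ * (-(1/m)) = -θ/m := by ring
    rw [hq]
    calc Real.exp (-θ/m) = Real.exp ((1-θ) * 0 + θ * (-(1/m))) := by rw [this]
      _ ≤ (1-θ) * Real.exp 0 + θ * Real.exp (-(1/m)) := by
          simpa using h
      _ = (1 - θ) + θ * Real.exp (-(1/m)) := by simp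
  -- tail bound
  have htailsum : Summable (fun s : ℕ => f (s + K)) := by
    exact (summable_nat_add_iff K).mpr hfsum
  have hgeo : ∑' s : ℕ, (C * q ^ K) * q ^ s = (C * q ^ K) * (1 - q)⁻¹ := by
    rw [tsum_mul_left, tsum_geometric_of_lt_one hq0.le hq1]
  have htail : ∑' s : ℕ, f (s + K) ≤ (C * q ^ K) * (1 - q)⁻¹ := by
    rw [← hgeo]
    apply Summable.tsum_le_tsum _ htailsum ((summable_geometric_of_lt_one hq0.le hq1).mul_left _)
    intro s
    calc f (s + K) ≤ C * q ^ (s + K) := hf_le _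
      _ = (C * q ^ K) * q ^ s := by ring
  have h1q : 0 < 1 - q := by linarith
  -- (1-q)⁻¹ < m + 1
  have hinv : (1 - q)⁻¹ < m + 1 := by
    have hexp : 1/m + 1 < Real.exp (1/m) := Real.add_one_lt_exp (by positivity)
    have hqlt : q < m / (m + 1) := by
      rw [hq, Real.exp_neg]
      rw [inv_lt_iff_one_lt_mul₀ (Real.exp_pos _)]
      have h1 : (m / (m+1)) * (1/m + 1) = 1 := by field_simp; ring
      calc (1:ℝ) = (m / (m+1)) * (1/m + 1) := h1.symm
          _ < (m / (m+1)) * Real.exp (1/m) := by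
            apply mul_lt_mul_of_pos_left hexp (by positivity)
    have hb : 1/(m+1) < 1 - q := by
      have : (1:ℝ) - m/(m+1) = 1/(m+1) := by field_simp; ring
      linarith
    calc (1 - q)⁻¹ < (1/(m+1))⁻¹ := by
          apply inv_strictAnti₀ (by positivity) hb
      _ = m + 1 := by simp
  -- combine
  have htail2 : ∑' s : ℕ, f (s + K) ≤ (1 - q)⁻¹ - θ := by
    calc ∑' s : ℕ, f (s + K) ≤ (C * q ^ K) * (1 - q)⁻¹ := htail
      _ ≤ ((1 - θ) + θ * q) * (1 - q)⁻¹ := by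
          rw [hCK]
          exact mul_le_mul_of_nonneg_right hconv (by positivity)
      _ = (1 - q)⁻¹ - θ := by field_simp; ring
  have hKval : (K : ℝ) = (⌊L⌋₊ : ℝ) + 2 := by push_cast [hK]; ring
  calc ∑' t : ℕ, f t = ∑ t ∈ range K, f t + ∑' s : ℕ, f (s + K) := hsplit.symm
    _ ≤ (K : ℝ) + ((1 - q)⁻¹ - θ) := add_le_add hhead htail2
    _ = L + 1 + (1 - q)⁻¹ := by rw [hKval, hθ]; ring
    _ < L + 1 + (m + 1) := by linarith
    _ = 2 + m * Real.log n + m := by rw [hL]; ring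
end
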